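/- Let n be a positive integer, θ ∈ (0,1) such that θn is NOT an integer, B > 0, and a ∈ ℝ^n with 0 ≤ a_1 < a_2 < ⋯ < a_n ≤ B. Set i* = n − ⌊θn⌋ and let Â = (1/(⌊θn⌋+1)) ∑_{i=i*}^n a_i be the average of the entries a_i with a_i ≥ a_{i*}. Then 0 ≤ max_{π∈P_θ} ∑_{i=1}^n π_i a_i − Â ≤ B/(θn). -/

import Mathlib

open scoped BigOperators

noncomputable section

lemma card_filter_ge_aux (n k : ℕ) :
    ((Finset.univ : Finset (Fin n)).filter fun i : Fin n => k ≤ (i : ℕ)).card = n - k := by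
  rw [← Nat.card_Ico k n]
  apply Finset.card_bij (fun (i : Fin n) _ => (i : ℕ))
  · intro i hi; simp only [Finset.mem_filter] at hi; simp [Finset.mem_Ico, hi.2, i.isLt]
  · intro i _ j _ h; exact Fin.ext h
  · intro b hb; simp only [Finset.mem_Ico] at hb
    exact ⟨⟨b, hb.2⟩, by simp [hb.1], rfl⟩

set_option maxHeartbeats 1600000 in
/-- When `θn` is not an integer, the hard-threshold tail average `Â` (over the `⌊θn⌋ + 1`
largest entries, i.e. 1-indexed entries `i* = n - ⌊θn⌋` through `n`) underestimates the
superquantile `max_{π ∈ P_θ} ∑ π i a i` by at most `B/(θn)`. -/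
theorem superquantile_hard_threshold_gap
    (n : ℕ) (hn : 0 < n) (θ : ℝ) (hθ : θ ∈ Set.Ioo (0:ℝ) 1)
    (hnotint : ¬ ∃ k : ℕ, (k : ℝ) = θ * n)
    (B : ℝ) (hB : 0 < B)
    (a : Fin n → ℝ) (ha : StrictMono a)
    (ha0 : 0 ≤ a ⟨0, hn⟩) (haB : a ⟨n - 1, by omega⟩ ≤ B) :
    ∀ Ahat : ℝ,
      Ahat = (1 / ((⌊θ * (n : ℝ)⌋₊ : ℝ) + 1)) *
        ∑ i ∈ Finset.univ.filter (fun i : Fin n => n - ⌊θ * (n : ℝ)⌋₊ - 1 ≤ (i : ℕ)), a i →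
      0 ≤ sSup {x : ℝ | ∃ π : Fin n → ℝ, (∀ i, 0 ≤ π i) ∧ (∑ i, π i = 1) ∧
          (∀ i, π i ≤ 1 / (θ * n)) ∧ x = ∑ i, π i * a i} - Ahat ∧
      sSup {x : ℝ | ∃ π : Fin n → ℝ, (∀ i, 0 ≤ π i) ∧ (∑ i, π i = 1) ∧
          (∀ i, π i ≤ 1 / (θ * n)) ∧ x = ∑ i, π i * a i} - Ahat ≤ B / (θ * n) := by
  intro Ahat hAhat
  obtain ⟨hθ0, hθ1⟩ := hθ
  have hn' : (0:ℝ) < n := by exact_mod_cast hn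
  have hθn : 0 < θ * n := by positivity
  set m := ⌊θ * (n:ℝ)⌋₊ with hm
  have hmlt : (m:ℝ) < θ * n := lt_of_le_of_ne (Nat.floor_le hθn.le) (fun h => hnotint ⟨m, h⟩)
  have hltm1 : θ * n < (m:ℝ) + 1 := Nat.lt_floor_add_one _
  have hθnn : θ * n < n := by nlinarith
  have hmn : m + 1 ≤ n := by
    have h1 : (m:ℝ) < n := hmlt.trans hθnn
    have : m < n := by exact_mod_cast h1
    omega
  set k := n - m - 1 with hk
  have hkn : k < n := by omega
  set j : Fin n := ⟨k, hkn⟩ with hj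
  set c := 1 / (θ * n) with hc
  have hc0 : 0 < c := by positivity
  set q := 1 / ((m:ℝ) + 1) with hq
  have hm1pos : (0:ℝ) < (m:ℝ) + 1 := by positivity
  have hq0 : 0 < q := by positivity
  set T : Finset (Fin n) := Finset.univ.filter (fun i : Fin n => k ≤ (i:ℕ)) with hT
  set T' : Finset (Fin n) := Finset.univ.filter (fun i : Fin n => k + 1 ≤ (i:ℕ)) with hT'
  have hjT' : j ∉ T' := by simp [hT', hj]
  have hins : T = insert j T' := by
    ext i; simp only [hT, hT', Finset.mem_insert, Finset.mem_filter, Finset.mem_univ,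
      true_and, hj, Fin.ext_iff]
    omega
  have hcardT' : T'.card = m := by
    rw [hT', card_filter_ge_aux]; omega
  -- basic bounds on a
  have haj0 : 0 ≤ a j := by
    refine ha0.trans (ha.monotone ?_)
    simp [Fin.le_def]
  have haB' : ∀ i, a i ≤ B := by
    intro i
    refine (ha.monotone (show i ≤ ⟨n - 1, by omega⟩ from ?_)).trans haB
    simp only [Fin.le_def]
    have := i.isLt
    omega
  have hajle : ∀ i ∈ T', a j ≤ a i := by
    intro i hi
    simp only [hT', Finset.mem_filter] at hi
    exact ha.monotone (by simp only [Fin.le_def, hj]; omega)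
  have hileaj : ∀ i : Fin n, i ∉ T' → a i ≤ a j := by
    intro i hi
    simp only [hT', Finset.mem_filter, Finset.mem_univ, true_and, not_le] at hi
    exact ha.monotone (by simp only [Fin.le_def, hj]; omega)
  -- D = sum of gaps
  set D := ∑ i ∈ T', (a i - a j) with hD
  have hD0 : 0 ≤ D := Finset.sum_nonneg fun i hi => sub_nonneg.2 (hajle i hi)
  have hDB : D ≤ (m:ℝ) * B := by
    have h1 : D ≤ ∑ _i ∈ T', B := Finset.sum_le_sum fun i _ => by
      have := haB' i; linarith [haj0]
    calc D ≤ ∑ _i ∈ T', B := h1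
      _ = (m:ℝ) * B := by rw [Finset.sum_const, hcardT', nsmul_eq_mul]
  have hsumT' : ∑ i ∈ T', a i = D + (m:ℝ) * a j := by
    have : D = (∑ i ∈ T', a i) - (m:ℝ) * a j := by
      rw [hD, Finset.sum_sub_distrib, Finset.sum_const, hcardT', nsmul_eq_mul]
    linarith
  have hsumT : ∑ i ∈ T, a i = ((m:ℝ) + 1) * a j + D := by
    rw [hins, Finset.sum_insert hjT', hsumT']; ring
  have hq1 : q * ((m:ℝ) + 1) = 1 := by
    rw [hq]; field_simp
  have hc1 : c * (θ * n) = 1 := by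
    rw [hc]; field_simp
  have hqc : q ≤ c := by
    rw [hq, hc]
    exact one_div_le_one_div_of_le hθn hltm1.le
  have hAhat' : Ahat = a j + q * D := by
    rw [hAhat, hsumT]; linear_combination (a j) * hq1
  set V := a j + c * D with hV
  -- upper bound for all feasible π
  have key : ∀ π : Fin n → ℝ, (∀ i, 0 ≤ π i) → (∑ i, π i) = 1 → (∀ i, π i ≤ c) →
      ∑ i, π i * a i ≤ V := by
    intro π h0 h1 hcap
    have hsplit : ∑ i, π i * (a i - a j) = (∑ i, π i * a i) - a j := by
      have : ∑ i, π i * (a i - a j) = (∑ i, π i * a i) - (∑ i, π i) * a j := by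
        rw [Finset.sum_mul]
        rw [← Finset.sum_sub_distrib]
        congr 1; ext i; ring
      rw [this, h1, one_mul]
    have hbound : ∑ i, π i * (a i - a j) ≤ ∑ i, (if i ∈ T' then c * (a i - a j) else 0) := by
      apply Finset.sum_le_sum
      intro i _
      by_cases hi : i ∈ T'
      · simp only [hi, if_true]
        exact mul_le_mul_of_nonneg_right (hcap i) (sub_nonneg.2 (hajle i hi))
      · simp only [hi, if_false]
        exact mul_nonpos_of_nonneg_of_nonpos (h0 i) (sub_nonpos.2 (hileaj i hi))
    have hsum2 : ∑ i, (if i ∈ T' then c * (a i - a j) else 0) = c * D := by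
      rw [Finset.sum_ite_mem, Finset.univ_inter, ← Finset.mul_sum, hD]
    rw [hsum2] at hbound
    rw [hsplit] at hbound
    rw [hV]; linarith
  -- the hat distribution witnesses Ahat ∈ S
  have hcardT : T.card = m + 1 := by
    rw [hins, Finset.card_insert_of_notMem hjT', hcardT']
  have hAmem : Ahat ∈ {x : ℝ | ∃ π : Fin n → ℝ, (∀ i, 0 ≤ π i) ∧ (∑ i, π i = 1) ∧
      (∀ i, π i ≤ 1 / (θ * n)) ∧ x = ∑ i, π i * a i} := by
    refine ⟨fun i => if i ∈ T then q else 0, fun i => ?_, ?_, fun i => ?_, ?_⟩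
    · by_cases h : i ∈ T <;> simp [h, hq0.le]
    · rw [show (∑ i, if i ∈ T then q else 0) = ∑ i ∈ Finset.univ ∩ T, q from
        Finset.sum_ite_mem _ _ _, Finset.univ_inter, Finset.sum_const, hcardT, nsmul_eq_mul]
      push_cast
      linarith [hq1]
    · rw [← hc]
      by_cases h : i ∈ T <;> simp only [h, if_true, if_false]
      · exact hqc
      · exact hc0.le
    · have heq : ∑ i, (if i ∈ T then q else 0) * a i = q * ∑ i ∈ T, a i := by
        simp only [ite_mul, zero_mul]
        rw [Finset.sum_ite_mem, Finset.univ_inter, Finset.mul_sum]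
      rw [heq, hsumT, hAhat']
      linear_combination (-(a j)) * hq1
  have hbdd : BddAbove {x : ℝ | ∃ π : Fin n → ℝ, (∀ i, 0 ≤ π i) ∧ (∑ i, π i = 1) ∧
      (∀ i, π i ≤ 1 / (θ * n)) ∧ x = ∑ i, π i * a i} := by
    refine ⟨V, ?_⟩
    rintro x ⟨π, h0, h1, hcap, rfl⟩
    exact key π h0 h1 (by simpa [hc] using hcap)
  have hle1 : Ahat ≤ sSup {x : ℝ | ∃ π : Fin n → ℝ, (∀ i, 0 ≤ π i) ∧ (∑ i, π i = 1) ∧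
      (∀ i, π i ≤ 1 / (θ * n)) ∧ x = ∑ i, π i * a i} := le_csSup hbdd hAmem
  have hle2 : sSup {x : ℝ | ∃ π : Fin n → ℝ, (∀ i, 0 ≤ π i) ∧ (∑ i, π i = 1) ∧
      (∀ i, π i ≤ 1 / (θ * n)) ∧ x = ∑ i, π i * a i} ≤ V := by
    apply csSup_le ⟨Ahat, hAmem⟩
    rintro x ⟨π, h0, h1, hcap, rfl⟩
    exact key π h0 h1 (by simpa [hc] using hcap)
  have hVA : V - Ahat ≤ B / (θ * n) := by
    have h1 : V - Ahat = (c - q) * D := by rw [hV, hAhat']; ring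
    have h2 : (c - q) * D ≤ (c - q) * ((m:ℝ) * B) :=
      mul_le_mul_of_nonneg_left hDB (by linarith)
    have h3 : (c - q) * (m:ℝ) ≤ c := by
      have hpos : 0 < θ * n * ((m:ℝ) + 1) := by positivity
      rw [← mul_le_mul_iff_of_pos_right hpos]
      have e2 : (c - q) * (m:ℝ) * (θ * n * ((m:ℝ) + 1)) = ((m:ℝ) + 1 - θ * n) * (m:ℝ) := by
        rw [hc, hq]; field_simp
      have e3 : c * (θ * n * ((m:ℝ) + 1)) = (m:ℝ) + 1 := by
        rw [hc]; field_simp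
      rw [e2, e3]
      nlinarith [mul_nonneg (sub_nonneg.2 hmlt.le) (Nat.cast_nonneg (α := ℝ) m)]
    have h4 : (c - q) * ((m:ℝ) * B) ≤ c * B := by
      have h4' := mul_le_mul_of_nonneg_right h3 hB.le
      nlinarith [h4']
    have h5 : c * B = B / (θ * n) := by rw [hc]; ring
    linarith
  constructor
  · linarith
  · linarith
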